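/- For every integer n ≥ 3, the prism graph C_n × P_2 is a super totally antimagic total graph, i.e. there exists a bijection f : V ∪ E → {1,...,5n} with f(V)={1,...,2n} such that all edge-weights are pairwise distinct and all vertex-weights are pairwise distinct. -/

import Mathlib

open Sum

/-- The weight of an edge `e` under a total labeling `f` of the graph `G`:
the label of `e` plus the labels of its two endpoints. -/
noncomputable def edgeWt {V : Type*} (G : SimpleGraph V) (f : V ⊕ G.edgeSet → ℕ)
    (e : G.edgeSet) : ℕ :=
  f (inr e) + ∑ᶠ (v : V) (_ : v ∈ (e : Sym2 V)), f (inl v)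

/-- The weight of a vertex `v` under a total labeling `f` of the graph `G`:
the label of `v` plus the labels of all edges incident with `v`. -/
noncomputable def vertexWt {V : Type*} (G : SimpleGraph V) (f : V ⊕ G.edgeSet → ℕ)
    (v : V) : ℕ :=
  f (inl v) + ∑ᶠ (e : G.edgeSet) (_ : v ∈ (e : Sym2 V)), f (inr e)

/-- The prism `C_n × P_2`, with vertices `u_i = inl i` and `v_i = inr i`
(`i` running over `Fin n`), cycle edges `u_i u_{i+1}`, `v_i v_{i+1}` (indices mod `n`)
and spokes `u_i v_i`. -/
def prism (n : ℕ) : SimpleGraph (Fin n ⊕ Fin n) :=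
  SimpleGraph.fromRel (fun a b =>
    (∃ p q : Fin n, ((p : ℕ) + 1) % n = (q : ℕ) ∧ a = inl p ∧ b = inl q) ∨
    (∃ p q : Fin n, ((p : ℕ) + 1) % n = (q : ℕ) ∧ a = inr p ∧ b = inr q) ∨
    (∃ p : Fin n, a = inl p ∧ b = inr p))

namespace PTAT
def gg (n i : ℕ) : ℕ := if 2*i < n then 2*i+1 else 2*(n-i)
def scv (n i : ℕ) : ℕ := if i+1 = n then 0 else i+1
def pcv (n i : ℕ) : ℕ := if i = 0 then n-1 else i-1
lemma scv_key (n i : ℕ) : (i+1 = n ∧ scv n i = 0) ∨ (i+1 ≠ n ∧ scv n i = i+1) := by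
  unfold scv; split
  · exact Or.inl ⟨by assumption, rfl⟩
  · exact Or.inr ⟨by assumption, rfl⟩
lemma pcv_key (n i : ℕ) : (i = 0 ∧ pcv n i = n-1) ∨ (i ≠ 0 ∧ pcv n i = i-1) := by
  unfold pcv; split
  · exact Or.inl ⟨by assumption, rfl⟩
  · exact Or.inr ⟨by assumption, rfl⟩
/-- inverse of gg -/
def ginv (n v : ℕ) : ℕ := if v % 2 = 1 then v / 2 else n - v/2

lemma gg_key (n : ℕ) : ∀ m, (2*m < n ∧ gg n m = 2*m+1) ∨ (2*m ≥ n ∧ gg n m = 2*(n-m)) := by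
  intro m; unfold gg; split
  · exact Or.inl ⟨by omega, rfl⟩
  · exact Or.inr ⟨by omega, rfl⟩

lemma gg_bounds {n i : ℕ} (hi : i < n) : 1 ≤ gg n i ∧ gg n i ≤ n := by
  have := gg_key n i; omega

lemma gg_inj {n i j : ℕ} (hi : i < n) (hj : j < n) (h : gg n i = gg n j) : i = j := by
  have := gg_key n i; have := gg_key n j; omega

lemma scv_lt {n i : ℕ} (hi : i < n) : scv n i < n := by unfold scv; split <;> omega

lemma scv_inj {n i j : ℕ} (hi : i < n) (hj : j < n) (h : scv n i = scv n j) : i = j := by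
  have := scv_key n i; have := scv_key n j; omega

lemma ginv_spec {n v : ℕ} (h1 : 1 ≤ v) (h2 : v ≤ n) : ginv n v < n ∧ gg n (ginv n v) = v := by
  unfold ginv gg; split_ifs <;> omega

/-- I3 : EY injectivity -/
lemma inj3 {n i j : ℕ} (hn : 3 ≤ n) (hi : i < n) (hj : j < n)
    (h : gg n i + gg n (scv n i) + gg n (n-1-i) = gg n j + gg n (scv n j) + gg n (n-1-j)) :
    i = j := by
  have k1 := gg_key n i; have k2 := gg_key n j
  have k3 := gg_key n (n-1-i); have k4 := gg_key n (n-1-j)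
  rcases scv_key n i with ⟨h1, e1⟩ | ⟨h1, e1⟩ <;> rcases scv_key n j with ⟨h2, e2⟩ | ⟨h2, e2⟩ <;>
    rw [e1, e2] at h
  · have k5 := gg_key n 0; omega
  · have k5 := gg_key n 0; have k6 := gg_key n (j+1); omega
  · have k5 := gg_key n (i+1); have k6 := gg_key n 0; omega
  · have k5 := gg_key n (i+1); have k6 := gg_key n (j+1); omega

/-- I4 : WU injectivity (cyclic adjacent sums of gg distinct) -/
lemma inj4 {n i j : ℕ} (hn : 3 ≤ n) (hi : i < n) (hj : j < n)
    (h : gg n (if i = 0 then n-1 else i-1) + gg n i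
       = gg n (if j = 0 then n-1 else j-1) + gg n j) : i = j := by
  have k1 := gg_key n i; have k2 := gg_key n j
  have k3 := gg_key n (n-1); have k4 := gg_key n (i-1); have k5 := gg_key n (j-1)
  rcases eq_or_ne i 0 with h1 | h1
  · rw [if_pos h1] at h
    rcases eq_or_ne j 0 with h2 | h2
    · omega
    · rw [if_neg h2] at h; omega
  · rw [if_neg h1] at h
    rcases eq_or_ne j 0 with h2 | h2
    · rw [if_pos h2] at h; omega
    · rw [if_neg h2] at h; omega

/-- I5 : WV injectivity -/
lemma inj5 {n i j : ℕ} (hn : 3 ≤ n) (hi : i < n) (hj : j < n)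
    (h : 2 * gg n i + gg n (if i = 0 then 0 else n-i) + gg n (n-1-i)
       = 2 * gg n j + gg n (if j = 0 then 0 else n-j) + gg n (n-1-j)) : i = j := by
  have k1 := gg_key n i; have k2 := gg_key n j
  have k3 := gg_key n (n-1-i); have k4 := gg_key n (n-1-j)
  have k5 := gg_key n 0; have k6 := gg_key n (n-i); have k7 := gg_key n (n-j)
  rcases eq_or_ne i 0 with h1 | h1
  · rw [if_pos h1] at h
    rcases eq_or_ne j 0 with h2 | h2
    · omega
    · rw [if_neg h2] at h; omega
  · rw [if_neg h1] at h
    rcases eq_or_ne j 0 with h2 | h2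
    · rw [if_pos h2] at h; omega
    · rw [if_neg h2] at h; omega

lemma succ_mod {n i : ℕ} (hi : i < n) : (i+1) % n = scv n i := by
  unfold scv; split
  · next h => rw [h]; exact Nat.mod_self n
  · exact Nat.mod_eq_of_lt (by omega)

def sc (n : ℕ) (i : Fin n) : Fin n := ⟨scv n i.val, by have := i.isLt; unfold scv; split <;> omega⟩
def pc (n : ℕ) (i : Fin n) : Fin n := ⟨pcv n i.val, by have := i.isLt; unfold pcv; split <;> omega⟩

lemma sc_pc (n : ℕ) (i : Fin n) : sc n (pc n i) = i := by
  have := i.isLt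
  apply Fin.ext
  show scv n (pcv n i.val) = i.val
  have := scv_key n (pcv n i.val); have := pcv_key n i.val; omega

/-- the edge label function on ordered pairs of vertices -/
def el (n : ℕ) : (Fin n ⊕ Fin n) → (Fin n ⊕ Fin n) → ℕ
  | inl p, inl q =>
      if max p.val q.val = min p.val q.val + 1 then 2*n + gg n (min p.val q.val)
      else if min p.val q.val = 0 ∧ max p.val q.val = n-1 then 2*n + gg n (n-1)
      else 1
  | inr p, inr q =>
      if max p.val q.val = min p.val q.val + 1 then 4*n + gg n (n-1 - min p.val q.val)
      else if min p.val q.val = 0 ∧ max p.val q.val = n-1 then 4*n + gg n 0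
      else 1
  | inl p, inr q => if p = q then 3*n + gg n p.val else 1
  | inr p, inl q => if q = p then 3*n + gg n q.val else 1

lemma el_symm (n : ℕ) (x y : Fin n ⊕ Fin n) : el n x y = el n y x := by
  cases x <;> cases y <;> simp only [el] <;>
    rw [Nat.max_comm, Nat.min_comm]

def elabel (n : ℕ) : Sym2 (Fin n ⊕ Fin n) → ℕ := Sym2.lift ⟨el n, el_symm n⟩

def E0 (n : ℕ) (i : Fin n) : Sym2 (Fin n ⊕ Fin n) := s(inl i, inl (sc n i))
def E1 (n : ℕ) (i : Fin n) : Sym2 (Fin n ⊕ Fin n) := s(inr i, inr (sc n i))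
def E2 (n : ℕ) (i : Fin n) : Sym2 (Fin n ⊕ Fin n) := s(inl i, inr i)

/-- the total labeling -/
def fdef (n : ℕ) : (Fin n ⊕ Fin n) ⊕ (prism n).edgeSet → ℕ
  | inl (inl i) => n + 1 - gg n i.val
  | inl (inr i) => n + gg n i.val
  | inr e => elabel n e.val

lemma sc_ne {n : ℕ} (hn : 3 ≤ n) (i : Fin n) : sc n i ≠ i := by
  have := i.isLt
  intro h
  have hv : scv n i.val = i.val := congrArg Fin.val h
  have := scv_key n i.val; omega

lemma E0_mem {n : ℕ} (hn : 3 ≤ n) (i : Fin n) : E0 n i ∈ (prism n).edgeSet := by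
  rw [E0, SimpleGraph.mem_edgeSet, prism, SimpleGraph.fromRel_adj]
  refine ⟨by simpa using (sc_ne hn i).symm, Or.inl (Or.inl ⟨i, sc n i, ?_, rfl, rfl⟩)⟩
  exact succ_mod i.isLt

lemma E1_mem {n : ℕ} (hn : 3 ≤ n) (i : Fin n) : E1 n i ∈ (prism n).edgeSet := by
  rw [E1, SimpleGraph.mem_edgeSet, prism, SimpleGraph.fromRel_adj]
  refine ⟨by simpa using (sc_ne hn i).symm, Or.inl (Or.inr (Or.inl ⟨i, sc n i, ?_, rfl, rfl⟩))⟩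
  exact succ_mod i.isLt

lemma E2_mem {n : ℕ} (hn : 3 ≤ n) (i : Fin n) : E2 n i ∈ (prism n).edgeSet := by
  rw [E2, SimpleGraph.mem_edgeSet, prism, SimpleGraph.fromRel_adj]
  exact ⟨by simp, Or.inl (Or.inr (Or.inr ⟨i, rfl, rfl⟩))⟩

lemma edge_cases {n : ℕ} (e : Sym2 (Fin n ⊕ Fin n)) (he : e ∈ (prism n).edgeSet) :
    ∃ i : Fin n, e = E0 n i ∨ e = E1 n i ∨ e = E2 n i := by
  induction e using Sym2.ind with
  | _ x y =>
    rw [SimpleGraph.mem_edgeSet, prism, SimpleGraph.fromRel_adj] at he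
    obtain ⟨-, hrel⟩ := he
    have hsc : ∀ p q : Fin n, ((p : ℕ) + 1) % n = (q : ℕ) → q = sc n p := by
      intro p q h
      apply Fin.ext
      rw [← h, succ_mod p.isLt]; rfl
    rcases hrel with (⟨p, q, hm, rfl, rfl⟩ | ⟨p, q, hm, rfl, rfl⟩ | ⟨p, rfl, rfl⟩) |
      (⟨p, q, hm, rfl, rfl⟩ | ⟨p, q, hm, rfl, rfl⟩ | ⟨p, rfl, rfl⟩)
    · exact ⟨p, Or.inl (by rw [E0, hsc p q hm])⟩
    · exact ⟨p, Or.inr (Or.inl (by rw [E1, hsc p q hm]))⟩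
    · exact ⟨p, Or.inr (Or.inr rfl)⟩
    · exact ⟨p, Or.inl (by rw [E0, hsc p q hm, Sym2.eq_swap])⟩
    · exact ⟨p, Or.inr (Or.inl (by rw [E1, hsc p q hm, Sym2.eq_swap]))⟩
    · exact ⟨p, Or.inr (Or.inr (by rw [E2, Sym2.eq_swap]))⟩

lemma elabel_E0 {n : ℕ} (hn : 3 ≤ n) (i : Fin n) : elabel n (E0 n i) = 2*n + gg n i.val := by
  have hlt := i.isLt
  have hv : (sc n i).val = scv n i.val := rfl
  rw [elabel, E0, Sym2.lift_mk]
  show el n (inl i) (inl (sc n i)) = _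
  simp only [el]
  rcases scv_key n i.val with ⟨h1, e1⟩ | ⟨h1, e1⟩
  · rw [if_neg (by omega), if_pos (by omega)]
    have h2 : i.val = n - 1 := by omega
    rw [h2]
  · rw [if_pos (by omega)]
    have h2 : min i.val (sc n i).val = i.val := by omega
    rw [h2]

lemma elabel_E1 {n : ℕ} (hn : 3 ≤ n) (i : Fin n) :
    elabel n (E1 n i) = 4*n + gg n (n - 1 - i.val) := by
  have hlt := i.isLt
  have hv : (sc n i).val = scv n i.val := rfl
  rw [elabel, E1, Sym2.lift_mk]
  show el n (inr i) (inr (sc n i)) = _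
  simp only [el]
  rcases scv_key n i.val with ⟨h1, e1⟩ | ⟨h1, e1⟩
  · rw [if_neg (by omega), if_pos (by omega)]
    have h2 : n - 1 - i.val = 0 := by omega
    rw [h2]
  · rw [if_pos (by omega)]
    have h2 : min i.val (sc n i).val = i.val := by omega
    rw [h2]

lemma elabel_E2 {n : ℕ} (i : Fin n) : elabel n (E2 n i) = 3*n + gg n i.val := by
  rw [elabel, E2, Sym2.lift_mk]
  show el n (inl i) (inr i) = _
  simp [el]


-- ===== stage 3 =====

lemma E0_ne_E1 {n : ℕ} (i j : Fin n) : E0 n i ≠ E1 n j := by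
  simp [E0, E1, Sym2.eq_iff]

lemma E0_ne_E2 {n : ℕ} (i j : Fin n) : E0 n i ≠ E2 n j := by
  simp [E0, E2, Sym2.eq_iff]

lemma E1_ne_E2 {n : ℕ} (i j : Fin n) : E1 n i ≠ E2 n j := by
  simp [E1, E2, Sym2.eq_iff]

lemma E0_inj {n : ℕ} (hn : 3 ≤ n) {i j : Fin n} (h : E0 n i = E0 n j) : i = j := by
  rw [E0, E0, Sym2.eq_iff] at h
  have hi := i.isLt; have hj := j.isLt
  have k1 := scv_key n i.val; have k2 := scv_key n j.val
  rcases h with ⟨h1, -⟩ | ⟨h1, h2⟩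
  · exact Sum.inl.inj h1
  · have v1 : i.val = scv n j.val := congrArg (Sum.elim Fin.val Fin.val) h1
    have v2 : scv n i.val = j.val := congrArg (Sum.elim Fin.val Fin.val) h2
    exact Fin.ext (by omega)

lemma E1_inj {n : ℕ} (hn : 3 ≤ n) {i j : Fin n} (h : E1 n i = E1 n j) : i = j := by
  rw [E1, E1, Sym2.eq_iff] at h
  have hi := i.isLt; have hj := j.isLt
  have k1 := scv_key n i.val; have k2 := scv_key n j.val
  rcases h with ⟨h1, -⟩ | ⟨h1, h2⟩
  · exact Sum.inr.inj h1
  · have v1 : i.val = scv n j.val := congrArg (Sum.elim Fin.val Fin.val) h1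
    have v2 : scv n i.val = j.val := congrArg (Sum.elim Fin.val Fin.val) h2
    exact Fin.ext (by omega)

lemma E2_inj {n : ℕ} {i j : Fin n} (h : E2 n i = E2 n j) : i = j := by
  rw [E2, E2, Sym2.eq_iff] at h
  rcases h with ⟨h1, -⟩ | ⟨h1, -⟩ <;> simp_all

lemma pc_ne {n : ℕ} (hn : 3 ≤ n) (i : Fin n) : pc n i ≠ i := by
  intro h
  have h2 := sc_pc n i
  rw [h] at h2
  exact sc_ne hn i h2

lemma endpoint_sum {V : Type*} (x y : V) (hxy : x ≠ y) (F : V → ℕ) :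
    (∑ᶠ (v : V) (_ : v ∈ s(x,y)), F v) = F x + F y := by
  have h : {v : V | v ∈ s(x,y)} = {x, y} := by ext v; simp [Sym2.mem_iff]
  show (∑ᶠ v ∈ {v : V | v ∈ s(x,y)}, F v) = F x + F y
  rw [h]; exact finsum_mem_pair hxy

lemma edgeWt_mk {V : Type*} (G : SimpleGraph V) (f : V ⊕ G.edgeSet → ℕ) (x y : V)
    (h : s(x,y) ∈ G.edgeSet) (hxy : x ≠ y) :
    edgeWt G f ⟨s(x,y), h⟩ = f (inr ⟨s(x,y), h⟩) + (f (inl x) + f (inl y)) := by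
  rw [edgeWt]
  congr 1
  exact endpoint_sum x y hxy (fun v => f (inl v))

lemma gg_lt {n : ℕ} (hn : 3 ≤ n) (i : Fin n) : gg n i.val ≤ n ∧ 1 ≤ gg n i.val :=
  ⟨(gg_bounds i.isLt).2, (gg_bounds i.isLt).1⟩

lemma inl_ne_inl_sc {n : ℕ} (hn : 3 ≤ n) (i : Fin n) :
    (inl i : Fin n ⊕ Fin n) ≠ inl (sc n i) := by
  simpa using (sc_ne hn i).symm

lemma inr_ne_inr_sc {n : ℕ} (hn : 3 ≤ n) (i : Fin n) :
    (inr i : Fin n ⊕ Fin n) ≠ inr (sc n i) := by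
  simpa using (sc_ne hn i).symm

lemma edgeWt_E0 {n : ℕ} (hn : 3 ≤ n) (i : Fin n) :
    edgeWt (prism n) (fdef n) ⟨E0 n i, E0_mem hn i⟩ = 4*n + 2 - gg n ((sc n i).val) := by
  rw [show (⟨E0 n i, E0_mem hn i⟩ : (prism n).edgeSet)
      = ⟨s(inl i, inl (sc n i)), E0_mem hn i⟩ from rfl]
  refine (edgeWt_mk (prism n) (fdef n) (inl i) (inl (sc n i)) (E0_mem hn i) (inl_ne_inl_sc hn i)).trans ?_
  have h1 : fdef n (inr ⟨s(inl i, inl (sc n i)), E0_mem hn i⟩) = 2*n + gg n i.val :=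
    elabel_E0 hn i
  rw [h1]
  show 2*n + gg n i.val + ((n + 1 - gg n i.val) + (n + 1 - gg n (sc n i).val)) = _
  have b1 := gg_lt hn i; have b2 := gg_lt hn (sc n i)
  omega

lemma edgeWt_E1 {n : ℕ} (hn : 3 ≤ n) (i : Fin n) :
    edgeWt (prism n) (fdef n) ⟨E1 n i, E1_mem hn i⟩
      = 6*n + (gg n i.val + gg n ((sc n i).val) + gg n (n - 1 - i.val)) := by
  rw [show (⟨E1 n i, E1_mem hn i⟩ : (prism n).edgeSet)
      = ⟨s(inr i, inr (sc n i)), E1_mem hn i⟩ from rfl]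
  refine (edgeWt_mk (prism n) (fdef n) (inr i) (inr (sc n i)) (E1_mem hn i) (inr_ne_inr_sc hn i)).trans ?_
  have h1 : fdef n (inr ⟨s(inr i, inr (sc n i)), E1_mem hn i⟩)
      = 4*n + gg n (n - 1 - i.val) := elabel_E1 hn i
  rw [h1]
  show _ + ((n + gg n i.val) + (n + gg n (sc n i).val)) = _
  omega

lemma edgeWt_E2 {n : ℕ} (hn : 3 ≤ n) (i : Fin n) :
    edgeWt (prism n) (fdef n) ⟨E2 n i, E2_mem hn i⟩ = 5*n + 1 + gg n i.val := by
  rw [show (⟨E2 n i, E2_mem hn i⟩ : (prism n).edgeSet)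
      = ⟨s(inl i, inr i), E2_mem hn i⟩ from rfl]
  refine (edgeWt_mk (prism n) (fdef n) (inl i) (inr i) (E2_mem hn i) (by simp)).trans ?_
  have h1 : fdef n (inr ⟨s(inl i, inr i), E2_mem hn i⟩) = 3*n + gg n i.val :=
    elabel_E2 i
  rw [h1]
  show _ + ((n + 1 - gg n i.val) + (n + gg n i.val)) = _
  have b1 := gg_lt hn i
  omega


-- ===== stage 4 =====

lemma incident_u {n : ℕ} (hn : 3 ≤ n) (i : Fin n) :
    {e : (prism n).edgeSet | inl i ∈ (e : Sym2 (Fin n ⊕ Fin n))} =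
      ({⟨E0 n (pc n i), E0_mem hn (pc n i)⟩, ⟨E0 n i, E0_mem hn i⟩,
        ⟨E2 n i, E2_mem hn i⟩} : Set (prism n).edgeSet) := by
  ext e
  simp only [Set.mem_setOf_eq, Set.mem_insert_iff, Set.mem_singleton_iff]
  constructor
  · intro hv
    obtain ⟨j, hj | hj | hj⟩ := edge_cases e.val e.prop
    · rw [hj, E0, Sym2.mem_iff] at hv
      rcases hv with h | h
      · right; left; exact Subtype.ext (by rw [hj, Sum.inl.inj h])
      · left
        apply Subtype.ext
        rw [hj]
        have hval : i.val = scv n j.val := congrArg Fin.val (Sum.inl.inj h)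
        have hx : j = pc n i := by
          apply Fin.ext
          have k1 := scv_key n j.val; have k2 := pcv_key n i.val
          have hi := i.isLt; have hj2 := j.isLt
          show j.val = pcv n i.val
          omega
        rw [← hx]
    · exfalso; rw [hj, E1, Sym2.mem_iff] at hv
      rcases hv with h | h <;> simp at h
    · rw [hj, E2, Sym2.mem_iff] at hv
      rcases hv with h | h
      · right; right; exact Subtype.ext (by rw [hj, Sum.inl.inj h])
      · exact absurd h (by simp)
  · intro hv
    rcases hv with rfl | rfl | rfl
    · show inl i ∈ E0 n (pc n i)
      rw [E0, Sym2.mem_iff, sc_pc]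
      exact Or.inr rfl
    · show inl i ∈ E0 n i
      rw [E0, Sym2.mem_iff]; exact Or.inl rfl
    · show inl i ∈ E2 n i
      rw [E2, Sym2.mem_iff]; exact Or.inl rfl

lemma incident_v {n : ℕ} (hn : 3 ≤ n) (i : Fin n) :
    {e : (prism n).edgeSet | inr i ∈ (e : Sym2 (Fin n ⊕ Fin n))} =
      ({⟨E1 n (pc n i), E1_mem hn (pc n i)⟩, ⟨E1 n i, E1_mem hn i⟩,
        ⟨E2 n i, E2_mem hn i⟩} : Set (prism n).edgeSet) := by
  ext e
  simp only [Set.mem_setOf_eq, Set.mem_insert_iff, Set.mem_singleton_iff]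
  constructor
  · intro hv
    obtain ⟨j, hj | hj | hj⟩ := edge_cases e.val e.prop
    · exfalso; rw [hj, E0, Sym2.mem_iff] at hv
      rcases hv with h | h <;> simp at h
    · rw [hj, E1, Sym2.mem_iff] at hv
      rcases hv with h | h
      · right; left; exact Subtype.ext (by rw [hj, Sum.inr.inj h])
      · left
        apply Subtype.ext
        rw [hj]
        have hval : i.val = scv n j.val := congrArg Fin.val (Sum.inr.inj h)
        have hx : j = pc n i := by
          apply Fin.ext
          have k1 := scv_key n j.val; have k2 := pcv_key n i.val
          have hi := i.isLt; have hj2 := j.isLt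
          show j.val = pcv n i.val
          omega
        rw [← hx]
    · rw [hj, E2, Sym2.mem_iff] at hv
      rcases hv with h | h
      · exact absurd h (by simp)
      · right; right; exact Subtype.ext (by rw [hj, Sum.inr.inj h])
  · intro hv
    rcases hv with rfl | rfl | rfl
    · show inr i ∈ E1 n (pc n i)
      rw [E1, Sym2.mem_iff, sc_pc]
      exact Or.inr rfl
    · show inr i ∈ E1 n i
      rw [E1, Sym2.mem_iff]; exact Or.inl rfl
    · show inr i ∈ E2 n i
      rw [E2, Sym2.mem_iff]; exact Or.inr rfl

lemma vertexWt_u {n : ℕ} (hn : 3 ≤ n) (i : Fin n) :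
    vertexWt (prism n) (fdef n) (inl i)
      = 8*n + 1 + (gg n ((pc n i).val) + gg n i.val) := by
  classical
  set a : (prism n).edgeSet := ⟨E0 n (pc n i), E0_mem hn (pc n i)⟩ with ha
  set b : (prism n).edgeSet := ⟨E0 n i, E0_mem hn i⟩ with hb
  set c : (prism n).edgeSet := ⟨E2 n i, E2_mem hn i⟩ with hc
  have hab : a ≠ b := fun h => pc_ne hn i (E0_inj hn (Subtype.ext_iff.mp h))
  have hac : a ≠ c := fun h => E0_ne_E2 _ _ (Subtype.ext_iff.mp h)
  have hbc : b ≠ c := fun h => E0_ne_E2 _ _ (Subtype.ext_iff.mp h)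
  have hset : {e : (prism n).edgeSet | inl i ∈ (e : Sym2 (Fin n ⊕ Fin n))}
      = (({a, b, c} : Finset (prism n).edgeSet) : Set (prism n).edgeSet) := by
    rw [incident_u hn i]; simp [ha, hb, hc]
  show fdef n (inl (inl i)) +
      (∑ᶠ e ∈ {e : (prism n).edgeSet | inl i ∈ (e : Sym2 (Fin n ⊕ Fin n))}, fdef n (inr e)) = _
  rw [hset, finsum_mem_coe_finset,
    Finset.sum_insert (by simp [hab, hac]),
    Finset.sum_insert (by simp [hbc]), Finset.sum_singleton]
  have v1 : fdef n (inr a) = 2*n + gg n ((pc n i).val) := elabel_E0 hn (pc n i)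
  have v2 : fdef n (inr b) = 2*n + gg n i.val := elabel_E0 hn i
  have v3 : fdef n (inr c) = 3*n + gg n i.val := elabel_E2 i
  rw [v1, v2, v3]
  show (n + 1 - gg n i.val) + _ = _
  have b1 := gg_lt hn i
  omega

lemma vertexWt_v {n : ℕ} (hn : 3 ≤ n) (i : Fin n) :
    vertexWt (prism n) (fdef n) (inr i)
      = 12*n + (2 * gg n i.val + gg n (n - 1 - (pc n i).val) + gg n (n - 1 - i.val)) := by
  classical
  set a : (prism n).edgeSet := ⟨E1 n (pc n i), E1_mem hn (pc n i)⟩ with ha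
  set b : (prism n).edgeSet := ⟨E1 n i, E1_mem hn i⟩ with hb
  set c : (prism n).edgeSet := ⟨E2 n i, E2_mem hn i⟩ with hc
  have hab : a ≠ b := fun h => pc_ne hn i (E1_inj hn (Subtype.ext_iff.mp h))
  have hac : a ≠ c := fun h => E1_ne_E2 _ _ (Subtype.ext_iff.mp h)
  have hbc : b ≠ c := fun h => E1_ne_E2 _ _ (Subtype.ext_iff.mp h)
  have hset : {e : (prism n).edgeSet | inr i ∈ (e : Sym2 (Fin n ⊕ Fin n))}
      = (({a, b, c} : Finset (prism n).edgeSet) : Set (prism n).edgeSet) := by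
    rw [incident_v hn i]; simp [ha, hb, hc]
  show fdef n (inl (inr i)) +
      (∑ᶠ e ∈ {e : (prism n).edgeSet | inr i ∈ (e : Sym2 (Fin n ⊕ Fin n))}, fdef n (inr e)) = _
  rw [hset, finsum_mem_coe_finset,
    Finset.sum_insert (by simp [hab, hac]),
    Finset.sum_insert (by simp [hbc]), Finset.sum_singleton]
  have v1 : fdef n (inr a) = 4*n + gg n (n - 1 - (pc n i).val) := elabel_E1 hn (pc n i)
  have v2 : fdef n (inr b) = 4*n + gg n (n - 1 - i.val) := elabel_E1 hn i
  have v3 : fdef n (inr c) = 3*n + gg n i.val := elabel_E2 i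
  rw [v1, v2, v3]
  show (n + gg n i.val) + _ = _
  omega


-- ===== stage 5 =====

lemma mid_eq {n i : ℕ} (hi : i < n) :
    n - 1 - pcv n i = if i = 0 then 0 else n - i := by
  rcases pcv_key n i with ⟨h, e⟩ | ⟨h, e⟩
  · rw [e, if_pos h]; omega
  · rw [e, if_neg h]; omega

lemma fdef_edge_cases {n : ℕ} (hn : 3 ≤ n) (e : (prism n).edgeSet) :
    ∃ i : Fin n,
      (e.val = E0 n i ∧ fdef n (inr e) = 2*n + gg n i.val) ∨
      (e.val = E1 n i ∧ fdef n (inr e) = 4*n + gg n (n - 1 - i.val)) ∨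
      (e.val = E2 n i ∧ fdef n (inr e) = 3*n + gg n i.val) := by
  obtain ⟨i, h | h | h⟩ := edge_cases e.val e.prop
  · exact ⟨i, Or.inl ⟨h, by show elabel n e.val = _; rw [h]; exact elabel_E0 hn i⟩⟩
  · exact ⟨i, Or.inr (Or.inl ⟨h, by show elabel n e.val = _; rw [h]; exact elabel_E1 hn i⟩)⟩
  · exact ⟨i, Or.inr (Or.inr ⟨h, by show elabel n e.val = _; rw [h]; exact elabel_E2 i⟩)⟩

lemma edgeWt_inj {n : ℕ} (hn : 3 ≤ n) :
    Function.Injective (edgeWt (prism n) (fdef n)) := by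
  intro e e' h
  obtain ⟨i, hi | hi | hi⟩ := edge_cases e.val e.prop <;>
    obtain ⟨j, hj | hj | hj⟩ := edge_cases e'.val e'.prop
  · rw [show e = ⟨E0 n i, E0_mem hn i⟩ from Subtype.ext hi,
      show e' = ⟨E0 n j, E0_mem hn j⟩ from Subtype.ext hj] at h ⊢
    rw [edgeWt_E0 hn i, edgeWt_E0 hn j] at h
    have b1 := gg_lt hn (sc n i); have b2 := gg_lt hn (sc n j)
    have h2 : gg n ((sc n i).val) = gg n ((sc n j).val) := by omega
    have h3 : scv n i.val = scv n j.val := gg_inj (sc n i).isLt (sc n j).isLt h2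
    have h4 : i = j := Fin.ext (scv_inj i.isLt j.isLt h3)
    rw [h4]
  · exfalso
    rw [show e = ⟨E0 n i, E0_mem hn i⟩ from Subtype.ext hi,
      show e' = ⟨E1 n j, E1_mem hn j⟩ from Subtype.ext hj] at h
    rw [edgeWt_E0 hn i, edgeWt_E1 hn j] at h
    have b1 := gg_lt hn (sc n i); have b2 := gg_lt hn i
    have b3 := gg_bounds (show n - 1 - j.val < n by omega)
    have b4 := gg_lt hn j; have b5 := gg_lt hn (sc n j)
    omega
  · exfalso
    rw [show e = ⟨E0 n i, E0_mem hn i⟩ from Subtype.ext hi,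
      show e' = ⟨E2 n j, E2_mem hn j⟩ from Subtype.ext hj] at h
    rw [edgeWt_E0 hn i, edgeWt_E2 hn j] at h
    have b1 := gg_lt hn (sc n i); have b2 := gg_lt hn j
    omega
  · exfalso
    rw [show e = ⟨E1 n i, E1_mem hn i⟩ from Subtype.ext hi,
      show e' = ⟨E0 n j, E0_mem hn j⟩ from Subtype.ext hj] at h
    rw [edgeWt_E1 hn i, edgeWt_E0 hn j] at h
    have b1 := gg_lt hn (sc n j); have b2 := gg_lt hn i
    have b3 := gg_bounds (show n - 1 - i.val < n by omega)
    have b4 := gg_lt hn (sc n i)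
    omega
  · rw [show e = ⟨E1 n i, E1_mem hn i⟩ from Subtype.ext hi,
      show e' = ⟨E1 n j, E1_mem hn j⟩ from Subtype.ext hj] at h ⊢
    rw [edgeWt_E1 hn i, edgeWt_E1 hn j] at h
    have h2 : i.val = j.val := by
      apply inj3 hn i.isLt j.isLt
      show gg n i.val + gg n ((sc n i).val) + gg n (n-1-i.val)
        = gg n j.val + gg n ((sc n j).val) + gg n (n-1-j.val)
      omega
    rw [Fin.ext h2]
  · exfalso
    rw [show e = ⟨E1 n i, E1_mem hn i⟩ from Subtype.ext hi,
      show e' = ⟨E2 n j, E2_mem hn j⟩ from Subtype.ext hj] at h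
    rw [edgeWt_E1 hn i, edgeWt_E2 hn j] at h
    have b1 := gg_lt hn i; have b2 := gg_lt hn (sc n i)
    have b3 := gg_bounds (show n - 1 - i.val < n by omega)
    have b4 := gg_lt hn j
    omega
  · exfalso
    rw [show e = ⟨E2 n i, E2_mem hn i⟩ from Subtype.ext hi,
      show e' = ⟨E0 n j, E0_mem hn j⟩ from Subtype.ext hj] at h
    rw [edgeWt_E2 hn i, edgeWt_E0 hn j] at h
    have b1 := gg_lt hn (sc n j); have b2 := gg_lt hn i
    omega
  · exfalso
    rw [show e = ⟨E2 n i, E2_mem hn i⟩ from Subtype.ext hi,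
      show e' = ⟨E1 n j, E1_mem hn j⟩ from Subtype.ext hj] at h
    rw [edgeWt_E2 hn i, edgeWt_E1 hn j] at h
    have b1 := gg_lt hn j; have b2 := gg_lt hn (sc n j)
    have b3 := gg_bounds (show n - 1 - j.val < n by omega)
    have b4 := gg_lt hn i
    omega
  · rw [show e = ⟨E2 n i, E2_mem hn i⟩ from Subtype.ext hi,
      show e' = ⟨E2 n j, E2_mem hn j⟩ from Subtype.ext hj] at h ⊢
    rw [edgeWt_E2 hn i, edgeWt_E2 hn j] at h
    have h2 : gg n i.val = gg n j.val := by omega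
    rw [Fin.ext (gg_inj i.isLt j.isLt h2)]

lemma vertexWt_inj {n : ℕ} (hn : 3 ≤ n) :
    Function.Injective (vertexWt (prism n) (fdef n)) := by
  intro v w h
  cases v with
  | inl i =>
    cases w with
    | inl j =>
      rw [vertexWt_u hn i, vertexWt_u hn j] at h
      have h2 : i.val = j.val := by
        apply inj4 hn i.isLt j.isLt
        show gg n ((pc n i).val) + gg n i.val = gg n ((pc n j).val) + gg n j.val
        omega
      rw [Fin.ext h2]
    | inr j =>
      exfalso
      rw [vertexWt_u hn i, vertexWt_v hn j] at h
      have b1 := gg_lt hn i; have b2 := gg_lt hn (pc n i)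
      have b3 := gg_lt hn j
      have b4 := gg_bounds (show n - 1 - (pc n j).val < n by omega)
      have b5 := gg_bounds (show n - 1 - j.val < n by omega)
      omega
  | inr i =>
    cases w with
    | inl j =>
      exfalso
      rw [vertexWt_v hn i, vertexWt_u hn j] at h
      have b1 := gg_lt hn j; have b2 := gg_lt hn (pc n j)
      have b3 := gg_lt hn i
      have b4 := gg_bounds (show n - 1 - (pc n i).val < n by omega)
      have b5 := gg_bounds (show n - 1 - i.val < n by omega)
      omega
    | inr j =>
      rw [vertexWt_v hn i, vertexWt_v hn j] at h
      have m1 : gg n (n - 1 - (pc n i).val) = gg n (if i.val = 0 then 0 else n - i.val) :=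
        congrArg (gg n) (mid_eq i.isLt)
      have m2 : gg n (n - 1 - (pc n j).val) = gg n (if j.val = 0 then 0 else n - j.val) :=
        congrArg (gg n) (mid_eq j.isLt)
      have h2 : i.val = j.val := by
        apply inj5 hn i.isLt j.isLt
        omega
      rw [Fin.ext h2]


-- ===== stage 6 =====

lemma fdef_vertex_bounds {n : ℕ} (hn : 3 ≤ n) (v : Fin n ⊕ Fin n) :
    1 ≤ fdef n (inl v) ∧ fdef n (inl v) ≤ 2*n := by
  cases v with
  | inl i => have := gg_lt hn i; show 1 ≤ n + 1 - gg n i.val ∧ n + 1 - gg n i.val ≤ 2*n; omega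
  | inr i => have := gg_lt hn i; show 1 ≤ n + gg n i.val ∧ n + gg n i.val ≤ 2*n; omega

lemma fdef_edge_bounds {n : ℕ} (hn : 3 ≤ n) (e : (prism n).edgeSet) :
    2*n + 1 ≤ fdef n (inr e) ∧ fdef n (inr e) ≤ 5*n := by
  obtain ⟨i, ⟨-, h⟩ | ⟨-, h⟩ | ⟨-, h⟩⟩ := fdef_edge_cases hn e <;> rw [h]
  · have := gg_lt hn i; omega
  · have := gg_bounds (show n - 1 - i.val < n by omega); omega
  · have := gg_lt hn i; omega

lemma fdef_vertex_inj {n : ℕ} (hn : 3 ≤ n) {v w : Fin n ⊕ Fin n}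
    (h : fdef n (inl v) = fdef n (inl w)) : v = w := by
  cases v with
  | inl i =>
    cases w with
    | inl j =>
      have b1 := gg_lt hn i; have b2 := gg_lt hn j
      have h2 : gg n i.val = gg n j.val := by
        have : n + 1 - gg n i.val = n + 1 - gg n j.val := h
        omega
      rw [Fin.ext (gg_inj i.isLt j.isLt h2)]
    | inr j =>
      exfalso
      have h2 : n + 1 - gg n i.val = n + gg n j.val := h
      have b1 := gg_lt hn i; have b2 := gg_lt hn j
      omega
  | inr i =>
    cases w with
    | inl j =>
      exfalso
      have h2 : n + gg n i.val = n + 1 - gg n j.val := h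
      have b1 := gg_lt hn i; have b2 := gg_lt hn j
      omega
    | inr j =>
      have h2 : n + gg n i.val = n + gg n j.val := h
      have h3 : gg n i.val = gg n j.val := by omega
      rw [Fin.ext (gg_inj i.isLt j.isLt h3)]

lemma fdef_injOn {n : ℕ} (hn : 3 ≤ n) :
    Set.InjOn (fdef n) Set.univ := by
  rintro x - y - h
  cases x with
  | inl v =>
    cases y with
    | inl w => rw [fdef_vertex_inj hn h]
    | inr e =>
      exfalso
      have b1 := fdef_vertex_bounds hn v
      have b2 := fdef_edge_bounds hn e
      omega
  | inr e =>
    cases y with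
    | inl w =>
      exfalso
      have b1 := fdef_vertex_bounds hn w
      have b2 := fdef_edge_bounds hn e
      omega
    | inr e' =>
      obtain ⟨i, hi⟩ := fdef_edge_cases hn e
      obtain ⟨j, hj⟩ := fdef_edge_cases hn e'
      have bi := gg_lt hn i; have bj := gg_lt hn j
      have bi' := gg_bounds (show n - 1 - i.val < n by omega)
      have bj' := gg_bounds (show n - 1 - j.val < n by omega)
      congr 1
      apply Subtype.ext
      rcases hi with ⟨hv, hl⟩ | ⟨hv, hl⟩ | ⟨hv, hl⟩ <;>
        rcases hj with ⟨hw, hl'⟩ | ⟨hw, hl'⟩ | ⟨hw, hl'⟩ <;>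
          rw [hv, hw] <;> rw [hl, hl'] at h
      · have h2 : gg n i.val = gg n j.val := by omega
        rw [Fin.ext (gg_inj i.isLt j.isLt h2)]
      · exfalso; omega
      · exfalso; omega
      · exfalso; omega
      · have h2 : gg n (n-1-i.val) = gg n (n-1-j.val) := by omega
        have h3 := gg_inj (show n-1-i.val < n by omega) (show n-1-j.val < n by omega) h2
        have h4 : i = j := Fin.ext (by have := i.isLt; have := j.isLt; omega)
        rw [h4]
      · exfalso; omega
      · exfalso; omega
      · exfalso; omega
      · have h2 : gg n i.val = gg n j.val := by omega
        rw [Fin.ext (gg_inj i.isLt j.isLt h2)]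

lemma fdef_surjOn {n : ℕ} (hn : 3 ≤ n) :
    Set.SurjOn (fdef n) Set.univ (Set.Icc 1 (5*n)) := by
  intro m hm
  simp only [Set.mem_Icc] at hm
  rcases Nat.lt_or_ge n m with h1 | h1
  case inr =>
    -- 1 ≤ m ≤ n : vertex u, label n+1-gg
    obtain ⟨hlt, hval⟩ := ginv_spec (show 1 ≤ n+1-m by omega) (show n+1-m ≤ n by omega)
    refine ⟨inl (inl ⟨ginv n (n+1-m), hlt⟩), Set.mem_univ _, ?_⟩
    show n + 1 - gg n (ginv n (n+1-m)) = m
    rw [hval]; omega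
  rcases Nat.lt_or_ge (2*n) m with h2 | h2
  case inr =>
    -- n < m ≤ 2n : vertex v, label n+gg
    obtain ⟨hlt, hval⟩ := ginv_spec (show 1 ≤ m-n by omega) (show m-n ≤ n by omega)
    refine ⟨inl (inr ⟨ginv n (m-n), hlt⟩), Set.mem_univ _, ?_⟩
    show n + gg n (ginv n (m-n)) = m
    rw [hval]; omega
  rcases Nat.lt_or_ge (3*n) m with h3 | h3
  case inr =>
    -- 2n < m ≤ 3n : E0 edge
    obtain ⟨hlt, hval⟩ := ginv_spec (show 1 ≤ m-2*n by omega) (show m-2*n ≤ n by omega)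
    refine ⟨inr ⟨E0 n ⟨ginv n (m-2*n), hlt⟩, E0_mem hn _⟩, Set.mem_univ _, ?_⟩
    show elabel n (E0 n ⟨ginv n (m-2*n), hlt⟩) = m
    rw [elabel_E0 hn]
    show 2*n + gg n (ginv n (m-2*n)) = m
    rw [hval]; omega
  rcases Nat.lt_or_ge (4*n) m with h4 | h4
  case inr =>
    -- 3n < m ≤ 4n : E2 edge
    obtain ⟨hlt, hval⟩ := ginv_spec (show 1 ≤ m-3*n by omega) (show m-3*n ≤ n by omega)
    refine ⟨inr ⟨E2 n ⟨ginv n (m-3*n), hlt⟩, E2_mem hn _⟩, Set.mem_univ _, ?_⟩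
    show elabel n (E2 n ⟨ginv n (m-3*n), hlt⟩) = m
    rw [elabel_E2]
    show 3*n + gg n (ginv n (m-3*n)) = m
    rw [hval]; omega
  -- 4n < m ≤ 5n : E1 edge
  obtain ⟨hlt, hval⟩ := ginv_spec (show 1 ≤ m-4*n by omega) (show m-4*n ≤ n by omega)
  refine ⟨inr ⟨E1 n ⟨n-1-ginv n (m-4*n), by omega⟩, E1_mem hn _⟩, Set.mem_univ _, ?_⟩
  show elabel n (E1 n ⟨n-1-ginv n (m-4*n), by omega⟩) = m
  rw [elabel_E1 hn]
  show 4*n + gg n (n-1-(n-1-ginv n (m-4*n))) = m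
  rw [show n-1-(n-1-ginv n (m-4*n)) = ginv n (m-4*n) by omega, hval]
  omega

lemma fdef_vertex_surjOn {n : ℕ} (hn : 3 ≤ n) :
    Set.SurjOn (fun v => fdef n (inl v)) Set.univ (Set.Icc 1 (2*n)) := by
  intro m hm
  simp only [Set.mem_Icc] at hm
  rcases Nat.lt_or_ge n m with h1 | h1
  case inr =>
    obtain ⟨hlt, hval⟩ := ginv_spec (show 1 ≤ n+1-m by omega) (show n+1-m ≤ n by omega)
    refine ⟨inl ⟨ginv n (n+1-m), hlt⟩, Set.mem_univ _, ?_⟩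
    show n + 1 - gg n (ginv n (n+1-m)) = m
    rw [hval]; omega
  obtain ⟨hlt, hval⟩ := ginv_spec (show 1 ≤ m-n by omega) (show m-n ≤ n by omega)
  refine ⟨inr ⟨ginv n (m-n), hlt⟩, Set.mem_univ _, ?_⟩
  show n + gg n (ginv n (m-n)) = m
  rw [hval]; omega

end PTAT

/-- For every `n ≥ 3` the prism `C_n × P_2` is a super totally antimagic total graph. -/
theorem prism_super_TAT (n : ℕ) (hn : 3 ≤ n) :
    ∃ f : (Fin n ⊕ Fin n) ⊕ (prism n).edgeSet → ℕ,
      Set.BijOn f Set.univ (Set.Icc 1 (5 * n)) ∧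
      Set.BijOn (fun v => f (inl v)) Set.univ (Set.Icc 1 (2 * n)) ∧
      Function.Injective (edgeWt (prism n) f) ∧
      Function.Injective (vertexWt (prism n) f) := by
  refine ⟨PTAT.fdef n, ⟨?_, PTAT.fdef_injOn hn, PTAT.fdef_surjOn hn⟩,
    ⟨?_, ?_, PTAT.fdef_vertex_surjOn hn⟩, PTAT.edgeWt_inj hn, PTAT.vertexWt_inj hn⟩
  · rintro x -
    simp only [Set.mem_Icc]
    cases x with
    | inl v => have := PTAT.fdef_vertex_bounds hn v; omega
    | inr e => have := PTAT.fdef_edge_bounds hn e; omega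
  · rintro v -
    simp only [Set.mem_Icc]
    have := PTAT.fdef_vertex_bounds hn v; omega
  · rintro v - w - h
    exact PTAT.fdef_vertex_inj hn h
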